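/- Let H be an infinite-dimensional complex Hilbert space, let p and q be projections on H such that p − q is a compact operator, let W be an isometry with W W* = p, and let V₁, V₂ be isometries with V₁ V₁* = q and V₂ V₂* = q. Then the kernels of V₁*W, W*V₁, V₂*W and W*V₂ are all finite-dimensional, and dim ker(V₁*W) − dim ker(W*V₁) = dim ker(V₂*W) − dim ker(W*V₂). (That is, the Fredholm index Ind(V*W) defining the essential codimension of Brown–Douglas–Fillmore is independent of the choice of isometry V with V V* = q.) -/

import Mathlib

open ContinuousLinearMap Module

/-- A projection on a Hilbert space: a self-adjoint idempotent bounded operator. -/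
def IsProjection {H : Type*} [NormedAddCommGroup H] [InnerProductSpace ℂ H]
    [CompleteSpace H] (p : H →L[ℂ] H) : Prop :=
  IsSelfAdjoint p ∧ p * p = p

/-- If a compact operator fixes every element of a closed subspace, that subspace is
finite dimensional (Riesz). -/
lemma finiteDimensional_of_compact_fixes {H : Type*} [NormedAddCommGroup H]
    [InnerProductSpace ℂ H] [CompleteSpace H] {K : H →L[ℂ] H}
    (hK : IsCompactOperator (⇑K)) (S : Submodule ℂ H) (hS : IsClosed (S : Set H))
    (hfix : ∀ x ∈ S, K x = x) : FiniteDimensional ℂ S := by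
  obtain ⟨C, hC, hCim⟩ := hK.image_closedBall_subset_compact (𝕜₁ := ℂ) 1
  have hA : IsCompact ((S : Set H) ∩ Metric.closedBall 0 1) := by
    refine hC.of_isClosed_subset (hS.inter Metric.isClosed_closedBall) ?_
    rintro x ⟨hxS, hxB⟩
    have : K x = x := hfix x hxS
    exact this ▸ hCim ⟨x, hxB, rfl⟩
  have hball : IsCompact (Metric.closedBall (0 : S) 1) := by
    rw [Topology.IsEmbedding.isCompact_iff (Topology.IsEmbedding.subtypeVal)]
    convert hA
    ext x
    simp only [Set.mem_image, Metric.mem_closedBall, dist_zero_right, Set.mem_inter_iff,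
      SetLike.mem_coe]
    constructor
    · rintro ⟨⟨y, hy⟩, hny, rfl⟩; exact ⟨hy, hny⟩
    · rintro ⟨hx, hnx⟩; exact ⟨⟨x, hx⟩, hnx, rfl⟩
  exact FiniteDimensional.of_isCompact_closedBall₀ ℂ one_pos hball

set_option maxHeartbeats 1000000 in
theorem essCodim_well_defined {H : Type*} [NormedAddCommGroup H] [InnerProductSpace ℂ H]
    [CompleteSpace H] (hinf : ¬ FiniteDimensional ℂ H)
    (p q W V₁ V₂ : H →L[ℂ] H)
    (hp : IsProjection p) (hq : IsProjection q)
    (hpq : IsCompactOperator (⇑(p - q)))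
    (hW : adjoint W * W = 1) (hWp : W * adjoint W = p)
    (hV₁ : adjoint V₁ * V₁ = 1) (hV₁q : V₁ * adjoint V₁ = q)
    (hV₂ : adjoint V₂ * V₂ = 1) (hV₂q : V₂ * adjoint V₂ = q) :
    FiniteDimensional ℂ (LinearMap.ker ((adjoint V₁ * W : H →L[ℂ] H) : H →ₗ[ℂ] H)) ∧
    FiniteDimensional ℂ (LinearMap.ker ((adjoint W * V₁ : H →L[ℂ] H) : H →ₗ[ℂ] H)) ∧
    FiniteDimensional ℂ (LinearMap.ker ((adjoint V₂ * W : H →L[ℂ] H) : H →ₗ[ℂ] H)) ∧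
    FiniteDimensional ℂ (LinearMap.ker ((adjoint W * V₂ : H →L[ℂ] H) : H →ₗ[ℂ] H)) ∧
    (finrank ℂ (LinearMap.ker ((adjoint V₁ * W : H →L[ℂ] H) : H →ₗ[ℂ] H)) : ℤ) -
      (finrank ℂ (LinearMap.ker ((adjoint W * V₁ : H →L[ℂ] H) : H →ₗ[ℂ] H)) : ℤ) =
    (finrank ℂ (LinearMap.ker ((adjoint V₂ * W : H →L[ℂ] H) : H →ₗ[ℂ] H)) : ℤ) -
      (finrank ℂ (LinearMap.ker ((adjoint W * V₂ : H →L[ℂ] H) : H →ₗ[ℂ] H)) : ℤ) := by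
  have hqp : IsCompactOperator (⇑(q - p)) := by
    rw [show (q - p : H →L[ℂ] H) = -(p - q) from (neg_sub _ _).symm]
    exact hpq.continuous_comp continuous_neg
  -- finite dimensionality of ker (adjoint V * W) for any isometry V with V V* = q
  have key1 : ∀ V : H →L[ℂ] H, adjoint V * V = 1 → V * adjoint V = q →
      FiniteDimensional ℂ (LinearMap.ker ((adjoint V * W : H →L[ℂ] H) : H →ₗ[ℂ] H)) := by
    intro V hV hVq
    have hKc : IsCompactOperator (⇑(adjoint W * (p - q) * W)) :=
      (hpq.comp_clm W).clm_comp (adjoint W)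
    refine finiteDimensional_of_compact_fixes hKc _
      (isClosed_ker (adjoint V * W : H →L[ℂ] H)) ?_
    intro x hx
    have hx0 : (adjoint V) (W x) = 0 := hx
    have h1 : (adjoint W * p * W) x = x := by
      rw [← hWp, show adjoint W * (W * adjoint W) * W = (adjoint W * W) * (adjoint W * W) by
        noncomm_ring, hW]
      simp
    have h2 : (adjoint W * q * W) x = 0 := by
      rw [← hVq]
      simp only [ContinuousLinearMap.mul_apply, hx0, map_zero]
    calc (adjoint W * (p - q) * W) x
        = (adjoint W * p * W) x - (adjoint W * q * W) x := by
          simp only [ContinuousLinearMap.mul_apply, ContinuousLinearMap.sub_apply, map_sub]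
      _ = x := by rw [h1, h2, sub_zero]
  -- finite dimensionality of ker (adjoint W * V)
  have key2 : ∀ V : H →L[ℂ] H, adjoint V * V = 1 → V * adjoint V = q →
      FiniteDimensional ℂ (LinearMap.ker ((adjoint W * V : H →L[ℂ] H) : H →ₗ[ℂ] H)) := by
    intro V hV hVq
    have hKc : IsCompactOperator (⇑(adjoint V * (q - p) * V)) :=
      (hqp.comp_clm V).clm_comp (adjoint V)
    refine finiteDimensional_of_compact_fixes hKc _
      (isClosed_ker (adjoint W * V : H →L[ℂ] H)) ?_
    intro x hx
    have hx0 : (adjoint W) (V x) = 0 := hx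
    have h1 : (adjoint V * q * V) x = x := by
      rw [← hVq, show adjoint V * (V * adjoint V) * V = (adjoint V * V) * (adjoint V * V) by
        noncomm_ring, hV]
      simp
    have h2 : (adjoint V * p * V) x = 0 := by
      rw [← hWp]
      simp only [ContinuousLinearMap.mul_apply, hx0, map_zero]
    calc (adjoint V * (q - p) * V) x
        = (adjoint V * q * V) x - (adjoint V * p * V) x := by
          simp only [ContinuousLinearMap.mul_apply, ContinuousLinearMap.sub_apply, map_sub]
      _ = x := by rw [h1, h2, sub_zero]
  refine ⟨key1 V₁ hV₁ hV₁q, key2 V₁ hV₁ hV₁q, key1 V₂ hV₂ hV₂q, key2 V₂ hV₂ hV₂q, ?_⟩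
  -- U = V₂* V₁ is a unitary with inverse U' = V₁* V₂
  set U : H →L[ℂ] H := adjoint V₂ * V₁ with hU
  set U' : H →L[ℂ] H := adjoint V₁ * V₂ with hU'
  have hUU' : U * U' = 1 := by
    rw [hU, hU', show adjoint V₂ * V₁ * (adjoint V₁ * V₂) = adjoint V₂ * (V₁ * adjoint V₁) * V₂ by
      noncomm_ring, hV₁q, ← hV₂q,
      show adjoint V₂ * (V₂ * adjoint V₂) * V₂ = (adjoint V₂ * V₂) * (adjoint V₂ * V₂) by
        noncomm_ring, hV₂]
    simp
  have hU'U : U' * U = 1 := by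
    rw [hU, hU', show adjoint V₁ * V₂ * (adjoint V₂ * V₁) = adjoint V₁ * (V₂ * adjoint V₂) * V₁ by
      noncomm_ring, hV₂q, ← hV₁q,
      show adjoint V₁ * (V₁ * adjoint V₁) * V₁ = (adjoint V₁ * V₁) * (adjoint V₁ * V₁) by
        noncomm_ring, hV₁]
    simp
  -- V₂* W = U (V₁* W)
  have hfac1 : adjoint V₂ * W = U * (adjoint V₁ * W) := by
    rw [hU, show adjoint V₂ * V₁ * (adjoint V₁ * W) = adjoint V₂ * (V₁ * adjoint V₁) * W by
      noncomm_ring, hV₁q, ← hV₂q,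
      show adjoint V₂ * (V₂ * adjoint V₂) * W = (adjoint V₂ * V₂) * (adjoint V₂ * W) by
        noncomm_ring, hV₂]
    simp
  -- W* V₂ = (W* V₁) U'
  have hfac2 : adjoint W * V₂ = (adjoint W * V₁) * U' := by
    rw [hU', show adjoint W * V₁ * (adjoint V₁ * V₂) = adjoint W * (V₁ * adjoint V₁) * V₂ by
      noncomm_ring, hV₁q, ← hV₂q,
      show adjoint W * (V₂ * adjoint V₂) * V₂ = (adjoint W * V₂) * (adjoint V₂ * V₂) by
        noncomm_ring, hV₂]
    simp
  have hU'Ux : ∀ x : H, U' (U x) = x := fun x => by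
    have := DFunLike.congr_fun hU'U x
    simpa [mul_apply] using this
  have hUU'x : ∀ x : H, U (U' x) = x := fun x => by
    have := DFunLike.congr_fun hUU' x
    simpa [mul_apply] using this
  -- hence ker (V₂* W) = ker (V₁* W)
  have hker1 : LinearMap.ker ((adjoint V₂ * W : H →L[ℂ] H) : H →ₗ[ℂ] H) = LinearMap.ker ((adjoint V₁ * W : H →L[ℂ] H) : H →ₗ[ℂ] H) := by
    ext x
    simp only [LinearMap.mem_ker]
    constructor
    · intro hx
      rw [hfac1] at hx
      have : U' (U ((adjoint V₁ * W) x)) = 0 := by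
        rw [show U ((adjoint V₁ * W) x) = (U * (adjoint V₁ * W)) x from rfl, show (U * (adjoint V₁ * W)) x = 0 from hx, map_zero]
      rwa [hU'Ux] at this
    · intro hx
      rw [hfac1]
      show (U * (adjoint V₁ * W)) x = 0
      rw [ContinuousLinearMap.mul_apply, show (adjoint V₁ * W) x = 0 from hx, map_zero]
  -- and ker (W* V₂) = (ker (W* V₁)).map U
  let e : H ≃ₗ[ℂ] H := LinearEquiv.ofLinear (U : H →ₗ[ℂ] H) (U' : H →ₗ[ℂ] H)
    (by ext x; exact hUU'x x) (by ext x; exact hU'Ux x)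
  have hker2 : LinearMap.ker ((adjoint W * V₂ : H →L[ℂ] H) : H →ₗ[ℂ] H) =
      (LinearMap.ker ((adjoint W * V₁ : H →L[ℂ] H) : H →ₗ[ℂ] H)).map (e : H →ₗ[ℂ] H) := by
    ext x
    simp only [Submodule.mem_map, LinearMap.mem_ker]
    constructor
    · intro hx
      refine ⟨U' x, ?_, hUU'x x⟩
      rw [hfac2] at hx
      exact hx
    · rintro ⟨y, hy, rfl⟩
      have hey : (e : H →ₗ[ℂ] H) y = U y := rfl
      rw [hey]
      show (adjoint W * V₂) (U y) = 0
      rw [hfac2, ContinuousLinearMap.mul_apply, show U' (U y) = y from hU'Ux y]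
      exact hy
  have h2 : finrank ℂ (LinearMap.ker ((adjoint W * V₂ : H →L[ℂ] H) : H →ₗ[ℂ] H)) =
      finrank ℂ (LinearMap.ker ((adjoint W * V₁ : H →L[ℂ] H) : H →ₗ[ℂ] H)) := by
    rw [hker2]
    exact LinearEquiv.finrank_map_eq e _
  rw [hker1, h2]
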